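/- Let (K, t, c, λ) be a weak mixed distributive law in Cat. Then the natural transformation Θ : tc ⟶ tc defined by Θ = (ε ▷ t ▷ c) ∘ (λ ▷ c) ∘ (t ◁ δ) is idempotent, i.e. Θ ∘ Θ = Θ. -/
import Mathlib


open CategoryTheory

universe v₁ u₁ v₂ u₂

variable {K : Type u₁} [Category.{v₁} K]

/-- A weak mixed distributive law `λ : tc ⟶ ct` between a monad `t` and a comonad `c`
on a category `K`, satisfying the four axioms of Böhm–Lack–Street, stated componentwise. -/
structure WeakMixedDistLaw (t : CategoryTheory.Monad K) (c : CategoryTheory.Comonad K) where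
  l : (c.toFunctor ⋙ t.toFunctor) ⟶ (t.toFunctor ⋙ c.toFunctor)
  mul_compat : ∀ X : K, t.μ.app (c.obj X) ≫ l.app X =
    t.map (l.app X) ≫ l.app (t.obj X) ≫ c.map (t.μ.app X)
  comul_compat : ∀ X : K, t.map (c.δ.app X) ≫ l.app (c.obj X) ≫ c.map (l.app X) =
    l.app X ≫ c.δ.app (t.obj X)
  weak_unit : ∀ X : K, t.η.app (c.obj X) ≫ l.app X =
    c.δ.app X ≫ c.map (t.η.app (c.obj X)) ≫ c.map (l.app X) ≫ c.map (c.ε.app (t.obj X))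
  weak_counit : ∀ X : K, l.app X ≫ c.ε.app (t.obj X) =
    t.map (t.η.app (c.obj X)) ≫ t.map (l.app X) ≫ t.map (c.ε.app (t.obj X)) ≫ t.μ.app X

/-- The canonical 2-cell Θ = (ε t c) ∘ (λ c) ∘ (t δ) : tc ⟶ tc of a weak mixed
distributive law is idempotent. -/
theorem canonical_idempotent (t : CategoryTheory.Monad K) (c : CategoryTheory.Comonad K)
    (W : WeakMixedDistLaw t c) :
    ∀ X : K,
      (t.map (c.δ.app X) ≫ W.l.app (c.obj X) ≫ c.ε.app (t.obj (c.obj X))) ≫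
        (t.map (c.δ.app X) ≫ W.l.app (c.obj X) ≫ c.ε.app (t.obj (c.obj X))) =
      t.map (c.δ.app X) ≫ W.l.app (c.obj X) ≫ c.ε.app (t.obj (c.obj X)) := by
  intro X
  simp only [Category.assoc]
  have h1 := (c.ε.naturality (t.map (c.δ.app X))).symm
  have h2 := (c.ε.naturality (W.l.app (c.obj X))).symm
  have h3 := c.ε.naturality (c.ε.app (t.obj (c.obj X)))
  have h4 := (W.l.naturality (c.δ.app X)).symm
  simp only [Functor.comp_map, Functor.comp_obj, Functor.id_obj, Functor.id_map] at h1 h2 h3 h4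
  slice_lhs 3 4 => rw [h1]
  slice_lhs 4 5 => rw [h2]
  slice_lhs 5 6 => rw [← h3]
  slice_lhs 2 3 => rw [h4]
  slice_lhs 1 2 => rw [← t.map_comp, c.coassoc, t.map_comp]
  slice_lhs 2 4 => rw [W.comul_compat]
  slice_lhs 3 4 => rw [c.right_counit]
  simp
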